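/- Let Q ∈ ℝ^{N×N}, κ > 0, and let (x, y) : [0, T] → ℝ^N × ℝ^N be a differentiable solution of x'(t) = Qᵀx(t) + κ(x(t)ᵀy(t))x(t) − κ·diag(y(t))·x(t), y'(t) = Qᵀy(t) + κ(x(t)ᵀy(t))y(t) − κ·diag(x(t))·y(t), with x(0) = y(0). Then x(t) = y(t) for all t ∈ [0, T]; that is, the diagonal set S₀ = {(x, y) : x = y} is invariant under the flow. -/

import Mathlib

open Matrix Set

/-- the diagonal set `S₀ = {(x,y) : x = y}` is invariant under the
interaction ODE: a solution with `x(0) = y(0)` satisfies `x(t) = y(t)` on `[0,T]`. -/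
theorem diagonal_invariant (N : ℕ) (Q : Matrix (Fin N) (Fin N) ℝ)
    (κ : ℝ) (hκ : 0 < κ) (T : ℝ) (hT : 0 ≤ T) (x y : ℝ → (Fin N → ℝ))
    (hdx : ∀ t ∈ Set.Icc (0 : ℝ) T, HasDerivWithinAt x
      (Qᵀ.mulVec (x t) + (κ * (x t ⬝ᵥ y t)) • x t
        - κ • (Matrix.diagonal (y t)).mulVec (x t)) (Set.Icc 0 T) t)
    (hdy : ∀ t ∈ Set.Icc (0 : ℝ) T, HasDerivWithinAt y
      (Qᵀ.mulVec (y t) + (κ * (x t ⬝ᵥ y t)) • y t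
        - κ • (Matrix.diagonal (x t)).mulVec (y t)) (Set.Icc 0 T) t)
    (h0 : x 0 = y 0) :
    ∀ t ∈ Set.Icc (0 : ℝ) T, x t = y t := by
  -- z := x - y satisfies the linear ODE z' = Qᵀ z + c(t) • z
  set z : ℝ → (Fin N → ℝ) := fun t => x t - y t with hz_def
  have hdz : ∀ t ∈ Set.Icc (0 : ℝ) T, HasDerivWithinAt z
      (Qᵀ.mulVec (z t) + (κ * (x t ⬝ᵥ y t)) • z t) (Set.Icc 0 T) t := by
    intro t ht
    have h := (hdx t ht).sub (hdy t ht)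
    have hdiag : ∀ (u v : Fin N → ℝ), (Matrix.diagonal u).mulVec v = u * v := by
      intro u v; funext i; simp [Matrix.mulVec_diagonal, mul_comm]
    convert h using 1
    case e'_4 => rfl
    case e'_5 => rfl
    case e'_6 => rfl
    case e'_8 => rfl
    rw [hdiag, hdiag, mul_comm (y t) (x t)]
    simp only [hz_def, Matrix.mulVec_sub, smul_sub]
    abel
  -- continuity of the coefficient
  have hxc : ContinuousOn x (Set.Icc 0 T) := fun t ht =>
    (hdx t ht).continuousWithinAt
  have hyc : ContinuousOn y (Set.Icc 0 T) := fun t ht =>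
    (hdy t ht).continuousWithinAt
  have hzc : ContinuousOn z (Set.Icc 0 T) := hxc.sub hyc
  -- operator norm bound for Qᵀ.mulVec
  set L : (Fin N → ℝ) →L[ℝ] (Fin N → ℝ) :=
    LinearMap.toContinuousLinearMap (Matrix.mulVecLin Qᵀ) with hL
  have hLapp : ∀ v, Qᵀ.mulVec v = L v := fun v => rfl
  set C : ℝ := ‖L‖ with hC
  -- bound the scalar coefficient on the compact interval
  have hcont : ContinuousOn (fun t => κ * (x t ⬝ᵥ y t)) (Set.Icc 0 T) := by
    apply ContinuousOn.mul continuousOn_const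
    exact continuousOn_finset_sum _ fun i _ =>
      ((continuous_apply i).comp_continuousOn hxc).mul
        ((continuous_apply i).comp_continuousOn hyc)
  obtain ⟨M, hM⟩ := (isCompact_Icc (a := (0:ℝ)) (b := T)).exists_bound_of_continuousOn hcont
  set K : ℝ := C + M with hK
  -- Grönwall
  have hbound : ∀ t ∈ Set.Ico (0 : ℝ) T,
      ‖Qᵀ.mulVec (z t) + (κ * (x t ⬝ᵥ y t)) • z t‖ ≤ K * ‖z t‖ + 0 := by
    intro t ht
    have ht' : t ∈ Set.Icc (0 : ℝ) T := Set.Ico_subset_Icc_self ht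
    calc ‖Qᵀ.mulVec (z t) + (κ * (x t ⬝ᵥ y t)) • z t‖
        ≤ ‖Qᵀ.mulVec (z t)‖ + ‖(κ * (x t ⬝ᵥ y t)) • z t‖ := norm_add_le _ _
      _ ≤ C * ‖z t‖ + ‖κ * (x t ⬝ᵥ y t)‖ * ‖z t‖ := by
          gcongr
          · rw [hLapp]; exact L.le_opNorm _
          · rw [norm_smul]
      _ ≤ C * ‖z t‖ + M * ‖z t‖ := by gcongr; exact hM t ht'
      _ = K * ‖z t‖ + 0 := by rw [hK]; ring
  have hderiv : ∀ t ∈ Set.Ico (0 : ℝ) T, HasDerivWithinAt z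
      (Qᵀ.mulVec (z t) + (κ * (x t ⬝ᵥ y t)) • z t) (Set.Ici t) t := by
    intro t ht
    refine (hdz t (Set.Ico_subset_Icc_self ht)).mono_of_mem_nhdsWithin ?_
    have : Set.Icc t T ∈ nhdsWithin t (Set.Ici t) := by
      rw [← Set.Ici_inter_Iic]
      exact inter_mem_nhdsWithin _ (Iic_mem_nhds ht.2)
    exact Filter.mem_of_superset this (Set.Icc_subset_Icc ht.1 le_rfl)
  have h0' : ‖z 0‖ ≤ 0 := by simp [hz_def, h0]
  have key := norm_le_gronwallBound_of_norm_deriv_right_le hzc hderiv h0' hbound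
  intro t ht
  have := key t ht
  rw [gronwallBound_ε0] at this
  simp only [zero_mul] at this
  have hz0 : ‖z t‖ ≤ 0 := by simpa using this
  have : z t = 0 := norm_le_zero_iff.mp hz0
  simpa [hz_def, sub_eq_zero] using this
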